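/- Suppose Ker L_1(0,ξ) = ∩_{j} Ker(ξ_j A_j) for all ξ ∈ ℝ^d, 0 is a semi-simple eigenvalue of L_1(0,ξ), and L_1(0,ξ) = S(ξ)D(ξ)S(ξ)^{-1} with D real diagonal. Let Q(ξ) be the partial inverse of L_1(0,ξ) determined by Q Π_L = 0 and Q L_1(0,ξ) = I - Π_L. Then, writing the change of variables V^1 = Σ_j U^j, V^l = U^l (l ≥ 2), the matrix Q̃(ξ) with first block column (L_1(0,ξ), ξ_2 A_2, ..., ξ_d A_d) and zeros elsewhere is diagonalized by the block matrix S̃(ξ) with diagonal blocks (S(ξ), I, ..., I) and first-column off-diagonal blocks ξ_j A_j Q(ξ) S(ξ) (j ≥ 2): S̃(ξ)^{-1} Q̃(ξ) S̃(ξ) = diag(D(ξ), 0, ..., 0). -/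
import Mathlib


open Matrix

/-- In the change of variables `V¹ = ΣUʲ`, `Vˡ = Uˡ (l ≥ 2)`, the block matrix
`Q̃(ξ)` (first block column `(L₁(0,ξ), ξ₂A₂, …, ξ_dA_d)`, zeros elsewhere) is
diagonalized by the block matrix `S̃(ξ)` with diagonal blocks `(S, I, …, I)` and
first-column off-diagonal blocks `ξⱼAⱼQ S`:
`S̃(ξ)⁻¹ Q̃(ξ) S̃(ξ) = diag(D(ξ), 0, …, 0)`. -/
theorem berenger_block_diagonalization (N d : ℕ) [NeZero d]
    (A : Fin d → Matrix (Fin N) (Fin N) ℂ)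
    (ξ : Fin d → ℝ)
    (L0 S Sinv D Q : Matrix (Fin N) (Fin N) ℂ)
    (hL0 : L0 = ∑ l, (ξ l : ℂ) • A l)
    (hSS : S * Sinv = 1) (hSS' : Sinv * S = 1)
    (hdiag : L0 = S * D * Sinv)
    (hD : D.IsDiag) (hDre : ∀ i, (D i i).im = 0)
    (hQ : ∀ j : Fin d, j ≠ 0 → (ξ j : ℂ) • (A j * (1 - Q * L0)) = 0)
    (Qt St Stinv : Matrix (Fin d × Fin N) (Fin d × Fin N) ℂ)
    (hQt : Qt = Matrix.of fun p q : Fin d × Fin N =>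
        if q.1 = 0 then
          (if p.1 = 0 then L0 p.2 q.2 else (ξ p.1 : ℂ) * A p.1 p.2 q.2)
        else 0)
    (hSt : St = Matrix.of fun p q : Fin d × Fin N =>
        if p.1 = 0 then (if q.1 = 0 then S p.2 q.2 else 0)
        else if q.1 = 0 then (ξ p.1 : ℂ) * (A p.1 * Q * S) p.2 q.2
        else if p = q then 1 else 0)
    (hStinv : Stinv = Matrix.of fun p q : Fin d × Fin N =>
        if p.1 = 0 then (if q.1 = 0 then Sinv p.2 q.2 else 0)
        else if q.1 = 0 then -((ξ p.1 : ℂ) * (A p.1 * Q) p.2 q.2)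
        else if p = q then 1 else 0) :
    St * Stinv = 1 ∧ Stinv * St = 1 ∧
    Stinv * Qt * St = Matrix.of fun p q : Fin d × Fin N =>
      if p.1 = 0 ∧ q.1 = 0 then D p.2 q.2 else 0 := by
  have key : ∀ (f g : Fin d → ℂ) (t : Fin d), t ≠ 0 → (∀ x, x ≠ 0 → x ≠ t → g x = 0) →
      ∑ k, (if k = 0 then f k else g k) = f 0 + g t := by
    intro f g t ht hg
    have h : ∀ k : Fin d, (if k = 0 then f k else g k)
        = (if k = 0 then f k else 0) + (if k = t then g k else 0) := by
      intro k
      rcases eq_or_ne k 0 with rfl | hk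
      · simp [Ne.symm ht]
      · rcases eq_or_ne k t with rfl | hk2
        · simp [hk]
        · simp [hk, hk2, hg k hk hk2]
    simp only [h, Finset.sum_add_distrib, Finset.sum_ite_eq', Finset.mem_univ, if_true]
  have hSLS : Sinv * (L0 * S) = D := by
    rw [hdiag, Matrix.mul_assoc (S * D) Sinv S, hSS', Matrix.mul_one,
      ← Matrix.mul_assoc, hSS', Matrix.one_mul]
  have hq : ∀ j : Fin d, j ≠ 0 →
      (ξ j : ℂ) • (A j * S) = (ξ j : ℂ) • (A j * (Q * (L0 * S))) := by
    intro j hj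
    have h1 : (ξ j : ℂ) • (A j) = (ξ j : ℂ) • (A j * (Q * L0)) := by
      have := hQ j hj
      rwa [Matrix.mul_sub, Matrix.mul_one, smul_sub, sub_eq_zero] at this
    rw [← smul_mul_assoc, h1, smul_mul_assoc, Matrix.mul_assoc, Matrix.mul_assoc]
  refine ⟨?_, ?_, ?_⟩
  · -- St * Stinv = 1
    subst hSt hStinv
    ext ⟨i, a⟩ ⟨j, b⟩
    simp only [Matrix.mul_apply, Fintype.sum_prod_type, Matrix.of_apply, Matrix.one_apply]
    rcases eq_or_ne i 0 with rfl | hi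
    · simp only [if_pos rfl, ite_mul, zero_mul,
        Finset.sum_ite_irrel, Finset.sum_ite_eq', Finset.mem_univ, if_true,
        Finset.sum_const_zero]
      rcases eq_or_ne j 0 with rfl | hj
      · simp only [if_pos rfl, mul_ite, mul_zero, Finset.sum_ite_irrel,
          Finset.sum_const_zero, if_pos rfl]
        rw [← Matrix.mul_apply, hSS]
        simp [Matrix.one_apply, Prod.ext_iff]
      · simp [hj, Ne.symm hj, Prod.ext_iff]
    · simp only [if_neg hi, Prod.mk.injEq, ite_mul, zero_mul, one_mul,
        Finset.sum_ite_irrel]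
      rw [key _ _ i hi ?side1]
      case side1 =>
        intro x hx0 hxi
        refine Finset.sum_eq_zero fun y _ => ?_
        simp [hx0, Ne.symm hxi]
      simp only [if_pos rfl, if_neg hi, ite_and, Finset.sum_ite_irrel,
        Finset.sum_ite_eq, Finset.sum_ite_eq', Finset.mem_univ, if_true,
        Finset.sum_const_zero, if_pos rfl]
      rcases eq_or_ne j 0 with rfl | hj
      · simp only [if_pos rfl, if_neg hi, Prod.mk.injEq, if_true]
        simp only [mul_assoc, ← Finset.mul_sum, ← Matrix.mul_apply]
        simp [hSS, hi, Matrix.mul_one, Matrix.mul_assoc]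
      · simp [hj, Ne.symm hj, hi, Prod.ext_iff]
  · -- Stinv * St = 1
    subst hSt hStinv
    ext ⟨i, a⟩ ⟨j, b⟩
    simp only [Matrix.mul_apply, Fintype.sum_prod_type, Matrix.of_apply, Matrix.one_apply]
    rcases eq_or_ne i 0 with rfl | hi
    · simp only [if_pos rfl, ite_mul, zero_mul,
        Finset.sum_ite_irrel, Finset.sum_ite_eq', Finset.mem_univ, if_true,
        Finset.sum_const_zero]
      rcases eq_or_ne j 0 with rfl | hj
      · simp only [if_pos rfl, mul_ite, mul_zero, Finset.sum_ite_irrel,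
          Finset.sum_const_zero]
        rw [← Matrix.mul_apply, hSS']
        simp [Matrix.one_apply, Prod.ext_iff]
      · simp [hj, Ne.symm hj, Prod.ext_iff]
    · simp only [if_neg hi, Prod.mk.injEq, ite_mul, zero_mul, one_mul, neg_mul,
        Finset.sum_ite_irrel]
      rw [key _ _ i hi ?side2]
      case side2 =>
        intro x hx0 hxi
        refine Finset.sum_eq_zero fun y _ => ?_
        simp [hx0, Ne.symm hxi]
      simp only [if_pos rfl, if_neg hi, ite_and, Finset.sum_ite_irrel,
        Finset.sum_ite_eq, Finset.sum_ite_eq', Finset.mem_univ, if_true,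
        Finset.sum_const_zero]
      rcases eq_or_ne j 0 with rfl | hj
      · simp only [if_pos rfl, if_neg hi, Prod.mk.injEq, if_true]
        simp only [mul_assoc, mul_neg, neg_mul, Finset.sum_neg_distrib,
          ← Finset.mul_sum, ← Matrix.mul_apply]
        simp [Matrix.mul_assoc]
      · simp [hj, Ne.symm hj, hi, Prod.ext_iff]
  · -- Stinv * Qt * St
    have hQtSt : Qt * St = Matrix.of fun p q : Fin d × Fin N =>
        if q.1 = 0 then
          (if p.1 = 0 then (L0 * S) p.2 q.2 else (ξ p.1 : ℂ) * (A p.1 * S) p.2 q.2)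
        else 0 := by
      subst hQt hSt
      ext ⟨i, a⟩ ⟨j, b⟩
      simp only [Matrix.mul_apply, Fintype.sum_prod_type, Matrix.of_apply]
      rcases eq_or_ne j 0 with rfl | hj
      · simp only [if_pos rfl, ite_mul, zero_mul, Finset.sum_ite_irrel,
          Finset.sum_ite_eq', Finset.mem_univ, if_true, Finset.sum_const_zero]
        rcases eq_or_ne i 0 with rfl | hi
        · simp [Matrix.mul_apply]
        · simp [hi, Matrix.mul_apply, Finset.mul_sum, mul_assoc]
      · simp only [if_neg hj]
        rw [show (0 : ℂ) = ∑ x : Fin d, ∑ y : Fin N, (0 : ℂ) by simp]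
        refine Finset.sum_congr rfl fun x _ => Finset.sum_congr rfl fun y _ => ?_
        rcases eq_or_ne x 0 with rfl | hx
        · simp [hj]
        · simp [hx, hj]
    rw [Matrix.mul_assoc, hQtSt]
    subst hStinv
    ext ⟨i, a⟩ ⟨j, b⟩
    simp only [Matrix.mul_apply, Fintype.sum_prod_type, Matrix.of_apply]
    rcases eq_or_ne j 0 with rfl | hj
    · rcases eq_or_ne i 0 with rfl | hi
      · simp only [if_pos rfl, ite_mul, zero_mul, Finset.sum_ite_irrel,
          Finset.sum_ite_eq', Finset.mem_univ, if_true, Finset.sum_const_zero]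
        simp only [← Matrix.mul_apply]
        rw [hSLS]
        simp
      · simp only [if_neg hi, Prod.mk.injEq, ite_mul, zero_mul, one_mul, neg_mul,
          Finset.sum_ite_irrel]
        rw [key _ _ i hi ?side3]
        case side3 =>
          intro x hx0 hxi
          refine Finset.sum_eq_zero fun y _ => ?_
          simp [hx0, Ne.symm hxi]
        simp only [if_pos rfl, if_neg hi, ite_and, Finset.sum_ite_irrel,
          Finset.sum_ite_eq, Finset.sum_ite_eq', Finset.mem_univ, if_true,
          Finset.sum_const_zero]
        simp only [mul_assoc, mul_neg, neg_mul, Finset.sum_neg_distrib,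
          ← Finset.mul_sum, ← Matrix.mul_apply]
        have h3 : (↑(ξ i) : ℂ) * (A i * S) a b
            = ↑(ξ i) * (A i * (Q * (L0 * S))) a b := by
          have := congrFun (congrFun (hq i hi) a) b
          simpa [Matrix.smul_apply, smul_eq_mul] using this
        simp [hi, h3]
    · simp [hj]
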